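/- Let f_N be a Beurling function with ∑_{k=1}^N a_k θ_k = 0, and F_N = f_N + 1. Then for every integer l ≥ 1, ∑_{k=1}^N a_k θ_k^{2l} = (1/ζ(2l)) (1 − 2l · M_{F_N}(2l)), where M_{F_N}(s) = ∫₀¹ F_N(x) x^{s−1} dx. -/

import Mathlib

open MeasureTheory Finset

lemma pointwise_floor (θ : ℝ) (hθ0 : 0 < θ) (m : ℕ) {x : ℝ} (hx : x ∈ Set.Ioc (0:ℝ) 1) :
    ((⌊θ/x⌋ : ℤ) : ℝ) * x^m
      = ∑' n : ℕ, Set.indicator (Set.Ioc 0 (θ/(n+1))) (fun y => y^m) x := by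
  obtain ⟨hx0, hx1⟩ := hx
  have hfl : 0 ≤ ⌊θ/x⌋ := Int.floor_nonneg.2 (le_of_lt (div_pos hθ0 hx0))
  set K : ℕ := (⌊θ/x⌋).toNat with hK
  have hKf : ((K : ℤ) : ℝ) = ((⌊θ/x⌋ : ℤ) : ℝ) := by
    rw [hK, Int.toNat_of_nonneg hfl]
  have hind : ∀ n : ℕ, Set.indicator (Set.Ioc 0 (θ/(n+1))) (fun y => y^m) x
      = if n < K then x^m else 0 := by
    intro n
    have e1 : x ≤ θ/((n:ℝ)+1) ↔ x*((n:ℝ)+1) ≤ θ := le_div_iff₀ (by positivity)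
    have e2 : ((n:ℝ)+1) ≤ θ/x ↔ ((n:ℝ)+1)*x ≤ θ := le_div_iff₀ hx0
    have hcond : x ∈ Set.Ioc (0:ℝ) (θ/(n+1)) ↔ n < K := by
      constructor
      · rintro ⟨-, h⟩
        have h1 : ((n:ℝ)+1) ≤ θ/x := e2.2 (by rw [mul_comm]; exact e1.1 h)
        have h2 : ((n:ℤ)+1) ≤ ⌊θ/x⌋ := Int.le_floor.2 (by push_cast; exact h1)
        omega
      · intro hn
        refine ⟨hx0, ?_⟩
        have h2 : ((n:ℤ)+1) ≤ ⌊θ/x⌋ := by omega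
        have h1 : ((n:ℝ)+1) ≤ θ/x := by
          have := Int.le_floor.1 h2
          push_cast at this ⊢
          linarith
        exact e1.2 (by rw [mul_comm]; exact e2.1 h1)
    by_cases h : n < K
    · rw [Set.indicator_of_mem (hcond.2 h), if_pos h]
    · rw [Set.indicator_of_notMem (fun hm => h (hcond.1 hm)), if_neg h]
  rw [tsum_congr hind, tsum_eq_sum (s := Finset.range K)
      (by intro n hn; rw [if_neg]; simpa using hn)]
  have hs : ∀ n ∈ Finset.range K, (if n < K then x^m else 0) = x^m :=
    fun n hn => if_pos (Finset.mem_range.1 hn)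
  rw [Finset.sum_congr rfl hs, Finset.sum_const, Finset.card_range, nsmul_eq_mul, ← hKf]
  push_cast
  ring

lemma integrable_fract_mul (θ : ℝ) (m : ℕ) :
    IntegrableOn (fun x : ℝ => Int.fract (θ/x) * x^m) (Set.Ioc 0 1) := by
  have hmeas : Measurable (fun x : ℝ => Int.fract (θ/x) * x^m) :=
    ((measurable_const.div measurable_id).fract).mul (measurable_id.pow_const m)
  refine Integrable.mono' (integrable_const 1) hmeas.aestronglyMeasurable ?_
  refine (ae_restrict_iff' measurableSet_Ioc).2 (Filter.Eventually.of_forall fun x hx => ?_)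
  rw [norm_mul]
  have h1 : ‖Int.fract (θ/x)‖ ≤ 1 := by
    rw [Real.norm_of_nonneg (Int.fract_nonneg _)]
    exact le_of_lt (Int.fract_lt_one _)
  have h2 : ‖x^m‖ ≤ 1 := by
    rw [Real.norm_of_nonneg (pow_nonneg (le_of_lt hx.1) m)]
    exact pow_le_one₀ (le_of_lt hx.1) hx.2
  nlinarith [norm_nonneg (Int.fract (θ/x)), norm_nonneg (x^m)]

lemma integrable_pow_mul (c : ℝ) (m : ℕ) :
    IntegrableOn (fun x : ℝ => c * x^m) (Set.Ioc 0 1) := by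
  have h0 : IntegrableOn (fun y : ℝ => y^m) (Set.Ioc 0 1) := by
    rw [← intervalIntegrable_iff_integrableOn_Ioc_of_le zero_le_one]
    exact intervalIntegral.intervalIntegrable_pow m
  exact h0.const_mul c

lemma fract_eqOn (θ : ℝ) (m : ℕ) (hm : 1 ≤ m) :
    Set.EqOn (fun x : ℝ => Int.fract (θ/x) * x^m)
      (fun x : ℝ => θ * x^(m-1) - ((⌊θ/x⌋ : ℤ) : ℝ) * x^m) (Set.Ioc 0 1) := by
  intro x hx
  have hx0 : x ≠ 0 := ne_of_gt hx.1
  have hpow : x^m = x * x^(m-1) := by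
    conv_lhs => rw [show m = (m-1)+1 by omega]
    rw [pow_succ]
    ring
  simp only [Int.fract]
  rw [sub_mul, hpow]
  field_simp

lemma integrable_floor_mul (θ : ℝ) (m : ℕ) (hm : 1 ≤ m) :
    IntegrableOn (fun x : ℝ => ((⌊θ/x⌋ : ℤ) : ℝ) * x^m) (Set.Ioc 0 1) := by
  have h := (integrable_pow_mul θ (m-1)).sub (integrable_fract_mul θ m)
  refine MeasureTheory.IntegrableOn.congr_fun h (fun x hx => ?_) measurableSet_Ioc
  have := fract_eqOn θ m hm hx
  simp only [Pi.sub_apply] at this ⊢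
  linarith [this]

lemma floor_integral (θ : ℝ) (hθ0 : 0 < θ) (hθ1 : θ ≤ 1) (m : ℕ) (hm : 1 ≤ m) :
    ∫ x in Set.Ioc (0:ℝ) 1, ((⌊θ/x⌋ : ℤ) : ℝ) * x^m
      = ∑' n : ℕ, (θ/(n+1))^(m+1)/(m+1) := by
  have hc : ∀ n : ℕ, 0 < θ/((n:ℝ)+1) ∧ θ/((n:ℝ)+1) ≤ 1 := by
    intro n
    constructor
    · positivity
    · rw [div_le_one (by positivity)]
      have : (0:ℝ) ≤ n := Nat.cast_nonneg n
      linarith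
  set f : ℕ → ℝ → ℝ := fun n => Set.indicator (Set.Ioc 0 (θ/(n+1))) (fun y => y^m) with hf
  have hint : ∀ n : ℕ, Integrable (f n) (volume.restrict (Set.Ioc (0:ℝ) 1)) := by
    intro n
    rw [hf, integrable_indicator_iff measurableSet_Ioc]
    have h0 : IntegrableOn (fun y : ℝ => y^m) (Set.Ioc 0 1) := by
      rw [← intervalIntegrable_iff_integrableOn_Ioc_of_le zero_le_one]
      exact intervalIntegral.intervalIntegrable_pow m
    rw [IntegrableOn, Measure.restrict_restrict measurableSet_Ioc]
    exact h0.mono_set Set.inter_subset_right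
  have hval : ∀ n : ℕ, ∫ x in Set.Ioc (0:ℝ) 1, f n x = (θ/(n+1))^(m+1)/(m+1) := by
    intro n
    rw [hf]
    rw [integral_indicator measurableSet_Ioc, Measure.restrict_restrict measurableSet_Ioc,
      Set.inter_eq_left.2 (Set.Ioc_subset_Ioc le_rfl (hc n).2)]
    rw [← intervalIntegral.integral_of_le (le_of_lt (hc n).1), integral_pow]
    simp
  have hnorm : ∀ n : ℕ, ∫ x in Set.Ioc (0:ℝ) 1, ‖f n x‖ = (θ/(n+1))^(m+1)/(m+1) := by
    intro n
    rw [← hval n]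
    refine setIntegral_congr_fun measurableSet_Ioc (fun x hx => ?_)
    rw [Real.norm_of_nonneg]
    refine Set.indicator_nonneg (fun y hy => ?_) x
    exact pow_nonneg (le_of_lt hy.1) m
  have hsumm : Summable fun n : ℕ => (θ/((n:ℝ)+1))^(m+1)/(m+1) := by
    have h1 : Summable fun n : ℕ => ((1:ℝ)/((n:ℝ)+1))^(m+1) := by
      have h2 : Summable fun n : ℕ => (1:ℝ)/(n:ℝ)^(m+1) :=
        Real.summable_one_div_nat_pow.2 (by omega)
      have h3 := (summable_nat_add_iff 1).2 h2
      refine h3.congr (fun n => ?_)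
      push_cast
      rw [div_pow, one_pow]
    have := (h1.mul_left (θ^(m+1)/(m+1)))
    refine this.congr (fun n => ?_)
    rw [div_pow, one_pow, div_pow]
    field_simp
  calc ∫ x in Set.Ioc (0:ℝ) 1, ((⌊θ/x⌋ : ℤ) : ℝ) * x^m
      = ∫ x in Set.Ioc (0:ℝ) 1, ∑' n : ℕ, f n x := by
        refine setIntegral_congr_fun measurableSet_Ioc (fun x hx => ?_)
        exact pointwise_floor θ hθ0 m hx
    _ = ∑' n : ℕ, ∫ x in Set.Ioc (0:ℝ) 1, f n x := by
        refine (MeasureTheory.integral_tsum_of_summable_integral_norm hint ?_).symm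
        exact hsumm.congr (fun n => (hnorm n).symm)
    _ = ∑' n : ℕ, (θ/(n+1))^(m+1)/(m+1) := tsum_congr hval

lemma core_integral (θ : ℝ) (hθ0 : 0 < θ) (hθ1 : θ ≤ 1) (m : ℕ) (hm : 1 ≤ m) :
    ∫ x in Set.Ioc (0:ℝ) 1, Int.fract (θ/x) * x^m
      = θ/m - θ^(m+1) * (∑' n : ℕ, (1:ℝ)/((n:ℝ)+1)^(m+1)) / (m+1) := by
  rw [setIntegral_congr_fun measurableSet_Ioc (fract_eqOn θ m hm),
    integral_sub (integrable_pow_mul θ (m-1)) (integrable_floor_mul θ m hm)]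
  have h1 : ∫ x in Set.Ioc (0:ℝ) 1, θ * x^(m-1) = θ/m := by
    rw [← intervalIntegral.integral_of_le zero_le_one, intervalIntegral.integral_const_mul,
      integral_pow]
    have hc : ((m-1:ℕ):ℝ) + 1 = m := by
      have := Nat.sub_add_cancel hm
      exact_mod_cast congrArg (Nat.cast (R := ℝ)) this
    rw [zero_pow (by omega), one_pow, hc]
    ring
  rw [h1, floor_integral θ hθ0 hθ1 m hm]
  have h2 : ∑' n : ℕ, (θ/((n:ℝ)+1))^(m+1)/(m+1)
      = θ^(m+1) * (∑' n : ℕ, (1:ℝ)/((n:ℝ)+1)^(m+1)) / (m+1) := by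
    calc ∑' n : ℕ, (θ/((n:ℝ)+1))^(m+1)/(m+1)
        = ∑' n : ℕ, θ^(m+1)/(m+1) * ((1:ℝ)/((n:ℝ)+1)^(m+1)) := by
          refine tsum_congr (fun n => ?_)
          rw [div_pow]
          have hn : ((n:ℝ)+1)^(m+1) ≠ 0 := by positivity
          field_simp
      _ = θ^(m+1)/(m+1) * ∑' n : ℕ, ((1:ℝ)/((n:ℝ)+1)^(m+1)) := tsum_mul_left
      _ = θ^(m+1) * (∑' n : ℕ, (1:ℝ)/((n:ℝ)+1)^(m+1)) / (m+1) := by ring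
  rw [h2]

lemma zeta_nat_eq (m : ℕ) (hm : 2 ≤ m) :
    riemannZeta (m : ℂ) = ((∑' n : ℕ, (1:ℝ)/((n:ℝ)+1)^m : ℝ) : ℂ) := by
  have hre : 1 < (Complex.ofReal m).re := by
    simp only [Complex.ofReal_re]
    exact_mod_cast by omega
  rw [show ((m:ℕ):ℂ) = ((m:ℝ):ℂ) by push_cast; ring] at *
  rw [zeta_eq_tsum_one_div_nat_add_one_cpow hre, Complex.ofReal_tsum]
  refine tsum_congr fun n => ?_
  rw [show ((m:ℝ):ℂ) = ((m:ℕ):ℂ) by push_cast; ring, Complex.cpow_natCast]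
  push_cast
  ring

lemma summable_aux (m : ℕ) (hm : 1 ≤ m) :
    Summable fun n : ℕ => (1:ℝ)/((n:ℝ)+1)^(m+1) := by
  have h2 : Summable fun n : ℕ => (1:ℝ)/(n:ℝ)^(m+1) :=
    Real.summable_one_div_nat_pow.2 (by omega)
  have h3 := (summable_nat_add_iff 1).2 h2
  refine h3.congr (fun n => ?_)
  push_cast
  ring_nf

/-- ∑_k a_k θ_k^{2l} = (1/ζ(2l)) (1 - 2l · M_{F_N}(2l)). -/
theorem sum_theta_pow_eq_mellin (N : ℕ) (a : ℕ → ℂ) (θ : ℕ → ℝ)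
    (hθ : ∀ k ∈ Finset.Icc 1 N, 0 < θ k ∧ θ k ≤ 1)
    (hsum : ∑ k ∈ Finset.Icc 1 N, a k * (θ k : ℂ) = 0)
    (l : ℕ) (hl : 1 ≤ l) :
    ∑ k ∈ Finset.Icc 1 N, a k * ((θ k : ℂ)) ^ (2 * l)
      = (1 / riemannZeta (2 * l)) *
        (1 - (2 * l : ℂ) *
          ∫ x in (0:ℝ)..1,
            ((∑ k ∈ Finset.Icc 1 N, a k * ((Int.fract (θ k / x) : ℝ) : ℂ)) + 1)
              * (x : ℂ) ^ (2 * l - 1)) := by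
  set m : ℕ := 2*l - 1 with hmdef
  have hm1 : 1 ≤ m := by omega
  have hms : m + 1 = 2*l := by omega
  set Z : ℝ := ∑' n : ℕ, (1:ℝ)/((n:ℝ)+1)^(m+1) with hZ
  have hZpos : 0 < Z := Summable.tsum_pos (summable_aux m hm1) (fun n => by positivity) 0 (by norm_num)
  have hzeta : riemannZeta (2 * (l:ℂ)) = (Z : ℂ) := by
    have h := zeta_nat_eq (m+1) (by omega)
    rw [show (((m+1:ℕ)):ℂ) = 2*(l:ℂ) by push_cast [hms]; push_cast; ring] at h
    rw [h]
  have hm0 : ((m:ℂ)) ≠ 0 := Nat.cast_ne_zero.mpr (by omega)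
  have hm10 : ((m:ℂ)+1) ≠ 0 := by
    have : ((m:ℂ)+1) = ((m+1:ℕ):ℂ) := by push_cast; ring
    rw [this]
    exact Nat.cast_ne_zero.mpr (by omega)
  -- integrability
  have hii : ∀ c : ℝ, IntervalIntegrable
      (fun x : ℝ => ((Int.fract (c/x) * x^m : ℝ) : ℂ)) volume 0 1 := fun c => by
    rw [intervalIntegrable_iff_integrableOn_Ioc_of_le zero_le_one]
    exact (integrable_fract_mul c m).ofReal
  have hxpow : IntervalIntegrable (fun x : ℝ => ((x^m : ℝ) : ℂ)) volume 0 1 := by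
    rw [intervalIntegrable_iff_integrableOn_Ioc_of_le zero_le_one]
    have h0 : IntegrableOn (fun y : ℝ => y^m) (Set.Ioc 0 1) := by
      rw [← intervalIntegrable_iff_integrableOn_Ioc_of_le zero_le_one]
      exact intervalIntegral.intervalIntegrable_pow m
    exact h0.ofReal
  -- value of each component integral
  have hIk : ∀ k, k ∈ Finset.Icc 1 N → (∫ x in (0:ℝ)..1, Int.fract (θ k / x) * x^m)
      = θ k/m - (θ k)^(m+1) * Z/(m+1) := by
    intro k hk
    rw [intervalIntegral.integral_of_le zero_le_one]
    exact core_integral (θ k) (hθ k hk).1 (hθ k hk).2 m hm1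
  -- compute the full integral
  have hint_eq : (∫ x in (0:ℝ)..1,
        ((∑ k ∈ Finset.Icc 1 N, a k * ((Int.fract (θ k / x) : ℝ) : ℂ)) + 1) * (x:ℂ)^m)
      = ∑ k ∈ Finset.Icc 1 N, a k * ((θ k/m - (θ k)^(m+1) * Z/(m+1) : ℝ) : ℂ)
        + (((1:ℝ)/(m+1) : ℝ) : ℂ) := by
    have h1 : ∀ x : ℝ, ((∑ k ∈ Finset.Icc 1 N, a k * ((Int.fract (θ k / x) : ℝ) : ℂ)) + 1) * (x:ℂ)^m
        = (∑ k ∈ Finset.Icc 1 N, a k * ((Int.fract (θ k / x) * x^m : ℝ) : ℂ)) + ((x^m : ℝ) : ℂ) := by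
      intro x
      rw [add_mul, Finset.sum_mul, one_mul]
      congr 1
      · refine Finset.sum_congr rfl fun k _ => ?_
        push_cast
        ring
      · push_cast
        ring
    rw [intervalIntegral.integral_congr (fun x _ => h1 x)]
    have hsum_ii : IntervalIntegrable
        (fun x : ℝ => ∑ k ∈ Finset.Icc 1 N, a k * ((Int.fract (θ k / x) * x^m : ℝ):ℂ))
        volume 0 1 := by
      have := IntervalIntegrable.sum (μ := volume) (a := (0:ℝ)) (b := 1) (Finset.Icc 1 N)
        (f := fun k => fun x : ℝ => a k * ((Int.fract (θ k / x) * x^m : ℝ):ℂ))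
        (fun k _ => (hii (θ k)).const_mul (a k))
      have heq : (∑ k ∈ Finset.Icc 1 N, fun x : ℝ => a k * ((Int.fract (θ k / x) * x^m : ℝ):ℂ))
          = fun x : ℝ => ∑ k ∈ Finset.Icc 1 N, a k * ((Int.fract (θ k / x) * x^m : ℝ):ℂ) := by
        ext x
        exact Finset.sum_apply _ _ _
      rwa [heq] at this
    rw [intervalIntegral.integral_add hsum_ii hxpow]
    congr 1
    · rw [intervalIntegral.integral_finset_sum (fun k _ => ((hii (θ k)).const_mul (a k)))]
      refine Finset.sum_congr rfl fun k hk => ?_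
      rw [intervalIntegral.integral_const_mul, intervalIntegral.integral_ofReal, hIk k hk]
    · rw [intervalIntegral.integral_ofReal]
      norm_cast
      rw [integral_pow]
      push_cast
      norm_num
  rw [hint_eq, hzeta]
  have e : ∀ k, a k * ((θ k/(m:ℝ) - (θ k)^(m+1) * Z/((m:ℝ)+1) : ℝ) : ℂ)
      = (1/(m:ℂ)) * (a k * (θ k:ℂ)) + (-((Z:ℂ)/((m:ℂ)+1))) * (a k * ((θ k:ℂ))^(2*l)) := by
    intro k
    rw [← hms]
    push_cast
    field_simp
    ring
  have hS : ∑ k ∈ Finset.Icc 1 N, a k * ((θ k/(m:ℝ) - (θ k)^(m+1) * Z/((m:ℝ)+1) : ℝ) : ℂ)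
      = -((Z:ℂ)/((m:ℂ)+1)) * ∑ k ∈ Finset.Icc 1 N, a k * ((θ k:ℂ))^(2*l) := by
    rw [Finset.sum_congr rfl (fun k _ => e k), Finset.sum_add_distrib,
      ← Finset.mul_sum, ← Finset.mul_sum, hsum, mul_zero, zero_add]
  rw [hS]
  have h2l : ((m:ℂ)+1) = 2*(l:ℂ) := by
    have := congrArg (Nat.cast (R := ℂ)) hms
    push_cast at this
    linear_combination this
  have hZne : (Z:ℂ) ≠ 0 := by
    exact_mod_cast ne_of_gt hZpos
  rw [← h2l]
  push_cast
  field_simp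
  ring
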